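/- Let H : ℝ^d → ℝ be twice continuously differentiable, and let ∇̄H : ℝ^d × ℝ^d → ℝ^d satisfy the discrete gradient condition, with y ↦ ∇̄H(x,y) twice continuously differentiable. Then for every x ∈ ℝ^d the Hessian of H satisfies ∇²H(x) = D₂∇̄H(x,x) + (D₂∇̄H(x,x))ᵀ; equivalently, ⟨∇²H(x)u, v⟩ = ⟨D₂∇̄H(x,x)u, v⟩ + ⟨D₂∇̄H(x,x)v, u⟩ for all u, v ∈ ℝ^d. -/

import Mathlib

open scoped RealInnerProductSpace

/-- For a C² (in the second argument) discrete gradient of a C² function `H`,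
the Hessian satisfies `∇²H(x) = D₂∇̄H(x,x) + (D₂∇̄H(x,x))ᵀ`, i.e.
`⟨∇²H(x)u, v⟩ = ⟨D₂∇̄H(x,x)u, v⟩ + ⟨D₂∇̄H(x,x)v, u⟩` for all `u, v`. -/
theorem hessian_eq_discrete_gradient_jacobian_add_transpose
    (d : ℕ) (H : EuclideanSpace ℝ (Fin d) → ℝ) (hH : ContDiff ℝ 2 H)
    (dg : EuclideanSpace ℝ (Fin d) → EuclideanSpace ℝ (Fin d) → EuclideanSpace ℝ (Fin d))
    (hdg : ∀ x y, ⟪dg x y, y - x⟫ = H y - H x)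
    (hdg2 : ∀ x, ContDiff ℝ 2 (dg x)) :
    ∀ (x u v : EuclideanSpace ℝ (Fin d)),
      ⟪fderiv ℝ (gradient H) x u, v⟫ =
        ⟪fderiv ℝ (dg x) x u, v⟫ + ⟪fderiv ℝ (dg x) x v, u⟫ := by
  intro x u v
  have hHd : Differentiable ℝ H := hH.differentiable two_ne_zero
  have hHf : ContDiff ℝ 1 (fderiv ℝ H) := hH.fderiv_right (le_refl 2)
  have hdgd : Differentiable ℝ (dg x) := (hdg2 x).differentiable two_ne_zero
  have hdgf : ContDiff ℝ 1 (fderiv ℝ (dg x)) := (hdg2 x).fderiv_right (le_refl 2)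
  -- evaluation CLM at v
  -- Step A: ∀ y, fderiv ℝ H y v = ⟪dg x y, v⟫ + ⟪fderiv ℝ (dg x) y v, y - x⟫
  have stepA : ∀ y : (EuclideanSpace ℝ (Fin d)), fderiv ℝ H y v = ⟪dg x y, v⟫ + ⟪fderiv ℝ (dg x) y v, y - x⟫ := by
    intro y
    have hfun : (fun z : (EuclideanSpace ℝ (Fin d)) => ⟪dg x z, z - x⟫) = fun z => H z - H x := funext fun z => hdg x z
    have h1 : fderiv ℝ (fun z : (EuclideanSpace ℝ (Fin d)) => ⟪dg x z, z - x⟫) y v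
        = ⟪dg x y, v⟫ + ⟪fderiv ℝ (dg x) y v, y - x⟫ := by
      rw [fderiv_inner_apply ℝ (hdgd y) (differentiableAt_fun_id.sub_const x) v]
      have : fderiv ℝ (fun z : (EuclideanSpace ℝ (Fin d)) => z - x) y = ContinuousLinearMap.id ℝ (EuclideanSpace ℝ (Fin d)) := by
        rw [fderiv_sub_const, fderiv_id']
      rw [this]; rfl
    have h2 : fderiv ℝ (fun z : (EuclideanSpace ℝ (Fin d)) => H z - H x) y = fderiv ℝ H y := fderiv_sub_const _
    rw [← h1, hfun, h2]
  -- differentiability of y ↦ fderiv ℝ (dg x) y v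
  have hdgfv : Differentiable ℝ (fun y : (EuclideanSpace ℝ (Fin d)) => fderiv ℝ (dg x) y v) := by
    have : Differentiable ℝ (fderiv ℝ (dg x)) := hdgf.differentiable one_ne_zero
    exact (ContinuousLinearMap.apply ℝ (EuclideanSpace ℝ (Fin d)) v).differentiable.comp this
  have hHfv : Differentiable ℝ (fun y : (EuclideanSpace ℝ (Fin d)) => fderiv ℝ H y v) := by
    have : Differentiable ℝ (fderiv ℝ H) := hHf.differentiable one_ne_zero
    exact (ContinuousLinearMap.apply ℝ ℝ v).differentiable.comp this
  -- Step C: differentiate step A at x in direction u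
  have stepC : fderiv ℝ (fun y : (EuclideanSpace ℝ (Fin d)) => fderiv ℝ H y v) x u
      = ⟪fderiv ℝ (dg x) x u, v⟫ + ⟪fderiv ℝ (dg x) x v, u⟫ := by
    have hfun : (fun y : (EuclideanSpace ℝ (Fin d)) => fderiv ℝ H y v)
        = fun y => ⟪dg x y, v⟫ + ⟪fderiv ℝ (dg x) y v, y - x⟫ := funext stepA
    rw [hfun]
    have d1 : DifferentiableAt ℝ (fun y : (EuclideanSpace ℝ (Fin d)) => ⟪dg x y, v⟫) x :=
      (hdgd x).inner ℝ (differentiableAt_const v)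
    have d2 : DifferentiableAt ℝ (fun y : (EuclideanSpace ℝ (Fin d)) => ⟪fderiv ℝ (dg x) y v, y - x⟫) x :=
      (hdgfv x).inner ℝ (differentiableAt_fun_id.sub_const x)
    rw [fderiv_fun_add d1 d2, ContinuousLinearMap.add_apply]
    congr 1
    · rw [fderiv_inner_apply ℝ (hdgd x) (differentiableAt_const v) u]
      simp
    · rw [fderiv_inner_apply ℝ (hdgfv x) (differentiableAt_fun_id.sub_const x) u]
      have : fderiv ℝ (fun z : (EuclideanSpace ℝ (Fin d)) => z - x) x = ContinuousLinearMap.id ℝ (EuclideanSpace ℝ (Fin d)) := by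
        rw [fderiv_sub_const, fderiv_id']
      rw [this]
      simp
  -- LHS equals second derivative
  have hgrad : gradient H = fun y => (InnerProductSpace.toDual ℝ (EuclideanSpace ℝ (Fin d))).symm (fderiv ℝ H y) := rfl
  have hLHS : ⟪fderiv ℝ (gradient H) x u, v⟫ = fderiv ℝ (fun y : (EuclideanSpace ℝ (Fin d)) => fderiv ℝ H y v) x u := by
    have hfd : HasFDerivAt (fderiv ℝ H) (fderiv ℝ (fderiv ℝ H) x) x :=
      ((hHf.differentiable one_ne_zero) x).hasFDerivAt
    have hg : HasFDerivAt (gradient H)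
        (((InnerProductSpace.toDual ℝ (EuclideanSpace ℝ (Fin d))).symm.toContinuousLinearEquiv :
          StrongDual ℝ (EuclideanSpace ℝ (Fin d)) ≃L[ℝ] (EuclideanSpace ℝ (Fin d))).toContinuousLinearMap.comp
          (fderiv ℝ (fderiv ℝ H) x)) x := by
      rw [hgrad]
      exact (((InnerProductSpace.toDual ℝ (EuclideanSpace ℝ (Fin d))).symm.toContinuousLinearEquiv
        : StrongDual ℝ (EuclideanSpace ℝ (Fin d)) ≃L[ℝ] (EuclideanSpace ℝ (Fin d))).toContinuousLinearMap.hasFDerivAt).comp x hfd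
    rw [hg.fderiv]
    have hv : HasFDerivAt (fun y : (EuclideanSpace ℝ (Fin d)) => fderiv ℝ H y v)
        ((ContinuousLinearMap.apply ℝ ℝ v).comp (fderiv ℝ (fderiv ℝ H) x)) x :=
      ((ContinuousLinearMap.apply ℝ ℝ v).hasFDerivAt).comp x hfd
    rw [hv.fderiv]
    simp only [ContinuousLinearMap.coe_comp', Function.comp_apply,
      ContinuousLinearEquiv.coe_coe, LinearIsometryEquiv.coe_toContinuousLinearEquiv]
    rw [InnerProductSpace.toDual_symm_apply]
    rfl
  rw [hLHS, stepC]
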